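/- Let u : [0,2π]×[0,T] → ℝ³ be a C⁴ (in s), C² (in t) solution of ∂_t² u = ∂_s²(-∂_s² + λ)u with |u(s,t)| = 1 for all s,t, and set κ² = |∂_s u|². Then the Lagrange multiplier λ satisfies the elliptic identity (-∂_s² + κ²)(λ + 2κ²) = |∂_t u|² + 2κ⁴ - |∂_s² u|² pointwise. -/

import Mathlib

open Real
open scoped RealInnerProductSpace

private lemma key_const {F G : ℝ → ℝ} {c : ℝ}
    (hFG : ∀ x, HasDerivAt F (G x) x) (hFc : ∀ x, F x = c) : ∀ x, G x = 0 := by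
  intro x
  have hF : F = fun _ => c := funext hFc
  have h0 : HasDerivAt F 0 x := by rw [hF]; exact hasDerivAt_const x c
  exact (hFG x).unique h0

theorem stmt19
    (u : ℝ → ℝ → EuclideanSpace ℝ (Fin 3)) (lam : ℝ → ℝ → ℝ)
    (hu : ContDiff ℝ 4 (Function.uncurry u))
    (hlam : ContDiff ℝ 2 (Function.uncurry lam))
    (hconstraint : ∀ s t, ‖u s t‖ = 1)
    (heq : ∀ s t, deriv (deriv (u s)) t =
      deriv (fun σ => deriv (fun σ' =>
        -(deriv (fun a => deriv (fun a' => u a' t) a) σ') + lam σ' t • u σ' t) σ) s) :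
    ∀ s t,
      -(deriv (fun a => deriv (fun a' =>
            lam a' t + 2 * ‖deriv (fun b => u b t) a'‖ ^ 2) a) s) +
        ‖deriv (fun b => u b t) s‖ ^ 2 * (lam s t + 2 * ‖deriv (fun b => u b t) s‖ ^ 2) =
      ‖deriv (u s) t‖ ^ 2 + 2 * ‖deriv (fun b => u b t) s‖ ^ 4 -
        ‖deriv (fun a => deriv (fun b => u b t) a) s‖ ^ 2 := by
  intro s t
  -- slice smoothness
  have hv : ContDiff ℝ 4 (fun a => u a t) :=
    hu.comp (contDiff_id.prodMk contDiff_const)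
  have hw : ContDiff ℝ 4 (u s) :=
    hu.comp (contDiff_const.prodMk contDiff_id)
  have hL : ContDiff ℝ 2 (fun a => lam a t) :=
    hlam.comp (contDiff_id.prodMk contDiff_const)
  set v : ℝ → EuclideanSpace ℝ (Fin 3) := fun a => u a t with hvdef
  set v1 := deriv v with hv1def
  set v2 := deriv v1 with hv2def
  set v3 := deriv v2 with hv3def
  set v4 := deriv v3 with hv4def
  -- differentiability chain for v
  rw [show (4 : WithTop ℕ∞) = 3 + 1 by norm_num, contDiff_succ_iff_deriv] at hv
  obtain ⟨hv_d, -, hv'⟩ := hv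
  rw [show (3 : WithTop ℕ∞) = 2 + 1 by norm_num, contDiff_succ_iff_deriv] at hv'
  obtain ⟨hv1_d, -, hv''⟩ := hv'
  rw [show (2 : WithTop ℕ∞) = 1 + 1 by norm_num, contDiff_succ_iff_deriv] at hv''
  obtain ⟨hv2_d, -, hv'''⟩ := hv''
  have hv3_d : Differentiable ℝ v3 := hv'''.differentiable one_ne_zero
  -- differentiability chain for w := u s
  set w1 := deriv (u s) with hw1def
  set w2 := deriv w1 with hw2def
  rw [show (4 : WithTop ℕ∞) = 3 + 1 by norm_num, contDiff_succ_iff_deriv] at hw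
  obtain ⟨hw_d, -, hw'⟩ := hw
  have hw1_d : Differentiable ℝ w1 := hw'.differentiable (by norm_num)
  -- lam slice
  set L := fun a => lam a t with hLdef
  set L1 := deriv L with hL1def
  set L2 := deriv L1 with hL2def
  rw [show (2 : WithTop ℕ∞) = 1 + 1 by norm_num, contDiff_succ_iff_deriv] at hL
  obtain ⟨hL_d, -, hL'⟩ := hL
  have hL1_d : Differentiable ℝ L1 := hL'.differentiable one_ne_zero
  -- HasDerivAt facts
  have Hv : ∀ x, HasDerivAt v (v1 x) x := fun x => (hv_d x).hasDerivAt
  have Hv1 : ∀ x, HasDerivAt v1 (v2 x) x := fun x => (hv1_d x).hasDerivAt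
  have Hv2 : ∀ x, HasDerivAt v2 (v3 x) x := fun x => (hv2_d x).hasDerivAt
  have Hv3 : ∀ x, HasDerivAt v3 (v4 x) x := fun x => (hv3_d x).hasDerivAt
  have Hw : ∀ x, HasDerivAt (u s) (w1 x) x := fun x => (hw_d x).hasDerivAt
  have Hw1 : ∀ x, HasDerivAt w1 (w2 x) x := fun x => (hw1_d x).hasDerivAt
  have HL : ∀ x, HasDerivAt L (L1 x) x := fun x => (hL_d x).hasDerivAt
  have HL1 : ∀ x, HasDerivAt L1 (L2 x) x := fun x => (hL1_d x).hasDerivAt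
  -- constraint chain in s
  have c0 : ∀ x, ⟪v x, v x⟫ = 1 := by
    intro x
    rw [real_inner_self_eq_norm_sq, show v x = u x t from rfl, hconstraint x t, one_pow]
  have c1 : ∀ x, ⟪v x, v1 x⟫ + ⟪v1 x, v x⟫ = 0 :=
    key_const (fun x => HasDerivAt.inner ℝ (Hv x) (Hv x)) c0
  have c1' : ∀ x, ⟪v x, v1 x⟫ = 0 := by
    intro x
    have h1 := c1 x
    have h2 : ⟪v x, v1 x⟫ = ⟪v1 x, v x⟫ := real_inner_comm _ _
    linarith
  have c2 : ∀ x, ⟪v x, v2 x⟫ + ⟪v1 x, v1 x⟫ = 0 :=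
    key_const (fun x => HasDerivAt.inner ℝ (Hv x) (Hv1 x)) c1'
  have c3 : ∀ x, (⟪v x, v3 x⟫ + ⟪v1 x, v2 x⟫) + (⟪v1 x, v2 x⟫ + ⟪v2 x, v1 x⟫) = 0 :=
    key_const (fun x => (HasDerivAt.inner ℝ (Hv x) (Hv2 x)).add
      (HasDerivAt.inner ℝ (Hv1 x) (Hv1 x))) c2
  have c4 : ∀ x, ((⟪v x, v4 x⟫ + ⟪v1 x, v3 x⟫) + (⟪v1 x, v3 x⟫ + ⟪v2 x, v2 x⟫)) +
      ((⟪v1 x, v3 x⟫ + ⟪v2 x, v2 x⟫) + (⟪v2 x, v2 x⟫ + ⟪v3 x, v1 x⟫)) = 0 :=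
    key_const (fun x => ((HasDerivAt.inner ℝ (Hv x) (Hv3 x)).add
      (HasDerivAt.inner ℝ (Hv1 x) (Hv2 x))).add
      ((HasDerivAt.inner ℝ (Hv1 x) (Hv2 x)).add
      (HasDerivAt.inner ℝ (Hv2 x) (Hv1 x)))) c3
  -- constraint chain in t
  have d0 : ∀ x, ⟪u s x, u s x⟫ = 1 := by
    intro x
    rw [real_inner_self_eq_norm_sq, hconstraint s x, one_pow]
  have d1 : ∀ x, ⟪u s x, w1 x⟫ = 0 := by
    have h := key_const (fun x => HasDerivAt.inner ℝ (Hw x) (Hw x)) d0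
    intro x
    have h1 := h x
    have h2 : ⟪u s x, w1 x⟫ = ⟪w1 x, u s x⟫ := real_inner_comm _ _
    linarith
  have d2 : ∀ x, ⟪u s x, w2 x⟫ + ⟪w1 x, w1 x⟫ = 0 :=
    key_const (fun x => HasDerivAt.inner ℝ (Hw x) (Hw1 x)) d1
  -- wave equation expanded
  set rhs1 : ℝ → EuclideanSpace ℝ (Fin 3) :=
    fun x => -(v3 x) + (L x • v1 x + L1 x • v x) with hrhs1def
  have hrhs1 : ∀ x, HasDerivAt (fun y => -(v2 y) + L y • v y) (rhs1 x) x :=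
    fun x => ((Hv2 x).neg).add ((HL x).smul (Hv x))
  have hderiv_g : ∀ σ,
      deriv (fun σ' => -(deriv (fun a => deriv (fun a' => u a' t) a) σ')
        + lam σ' t • u σ' t) σ = rhs1 σ := fun σ => (hrhs1 σ).deriv
  have hrhs2 : HasDerivAt rhs1
      (-(v4 s) + ((L s • v2 s + L1 s • v1 s) + (L1 s • v1 s + L2 s • v s))) s :=
    ((Hv3 s).neg).add (((HL s).smul (Hv1 s)).add ((HL1 s).smul (Hv s)))
  have Ewave : w2 t =
      -(v4 s) + ((L s • v2 s + L1 s • v1 s) + (L1 s • v1 s + L2 s • v s)) := by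
    have h3 := heq s t
    simp only [hderiv_g] at h3
    calc w2 t = deriv (deriv (u s)) t := rfl
      _ = deriv (fun σ => rhs1 σ) s := h3
      _ = _ := hrhs2.deriv
  have Einner : ⟪v s, w2 t⟫ = -⟪v s, v4 s⟫ +
      ((lam s t * ⟪v s, v2 s⟫ + L1 s * ⟪v s, v1 s⟫) +
       (L1 s * ⟪v s, v1 s⟫ + L2 s * ⟪v s, v s⟫)) := by
    rw [Ewave]
    simp only [inner_add_right, inner_neg_right, real_inner_smul_right]
    rfl
  -- second derivative of lam + 2 kappa^2
  have hPfun : (fun a' => lam a' t + 2 * ‖v1 a'‖ ^ 2)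
      = (fun a' => L a' + 2 * ⟪v1 a', v1 a'⟫) := by
    funext a'
    rw [real_inner_self_eq_norm_sq]
  have hQ : ∀ x, HasDerivAt (fun a' => L a' + 2 * ⟪v1 a', v1 a'⟫)
      (L1 x + 2 * (⟪v1 x, v2 x⟫ + ⟪v2 x, v1 x⟫)) x :=
    fun x => (HL x).add (HasDerivAt.const_mul 2 (HasDerivAt.inner ℝ (Hv1 x) (Hv1 x)))
  have hQd : (fun a => deriv (fun a' => L a' + 2 * ⟪v1 a', v1 a'⟫) a)
      = fun x => L1 x + 2 * (⟪v1 x, v2 x⟫ + ⟪v2 x, v1 x⟫) :=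
    funext fun x => (hQ x).deriv
  have hQ2d : deriv (fun x => L1 x + 2 * (⟪v1 x, v2 x⟫ + ⟪v2 x, v1 x⟫)) s
      = L2 s + 2 * ((⟪v1 s, v3 s⟫ + ⟪v2 s, v2 s⟫) + (⟪v2 s, v2 s⟫ + ⟪v3 s, v1 s⟫)) :=
    ((HL1 s).add (HasDerivAt.const_mul 2 ((HasDerivAt.inner ℝ (Hv1 s) (Hv2 s)).add
      (HasDerivAt.inner ℝ (Hv2 s) (Hv1 s))))).deriv
  rw [hPfun, hQd, hQ2d, show ‖v1 s‖ ^ 4 = (‖v1 s‖ ^ 2) ^ 2 by ring]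
  simp only [← real_inner_self_eq_norm_sq]
  have d2' : ⟪v s, w2 t⟫ + ⟪w1 t, w1 t⟫ = 0 := d2 t
  have hcomm31 : ⟪v3 s, v1 s⟫ = ⟪v1 s, v3 s⟫ := real_inner_comm _ _
  have hcomm21 : ⟪v2 s, v1 s⟫ = ⟪v1 s, v2 s⟫ := real_inner_comm _ _
  linear_combination Einner - d2' + L2 s * (c0 s) + 2 * L1 s * (c1' s)
    + lam s t * (c2 s) - (c4 s) - hcomm31
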